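/- For a configuration p = (a_1,…,a_N), the quantity Σ_{(i,j)∈E} u_ij(p)² · |a_i − a_j|² equals zero if and only if p is an equilibrium of the formation control system, i.e., if and only if Σ_{j∈V_i} u_ij(p)·(a_i − a_j) = 0 for every i = 1,…,N. -/

import Mathlib

open Finset
open scoped RealInnerProductSpace Classical

/-- The decentralized control law `u_ij(p)`. -/
noncomputable def uCtrl {n N : ℕ} (b a : Fin N → EuclideanSpace ℝ (Fin n)) (i j : Fin N) : ℝ :=
  if a j = a i then 0 else ⟪b j - b i, a j - a i⟫ / ‖a j - a i‖ ^ 2 - 1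

/-- The quadratic Lyapunov function `Φ(p) = ∑ ‖a i - b i‖²`. -/
noncomputable def Phi {n N : ℕ} (b a : Fin N → EuclideanSpace ℝ (Fin n)) : ℝ :=
  ∑ i, ‖a i - b i‖ ^ 2

/-- Sum over each undirected edge of `G` exactly once. -/
noncomputable def edgeSum {N : ℕ} (G : SimpleGraph (Fin N)) (f : Fin N → Fin N → ℝ) : ℝ :=
  ∑ p ∈ Finset.univ.filter (fun p : Fin N × Fin N => p.1 < p.2 ∧ G.Adj p.1 p.2), f p.1 p.2

/-- `p = a` is an equilibrium of the formation control system: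
`∑_{j ∈ V_i} u_ij (p) • (a i - a j) = 0` for every vertex `i`. -/
noncomputable def IsEquilibrium {n N : ℕ} (G : SimpleGraph (Fin N))
    (b a : Fin N → EuclideanSpace ℝ (Fin n)) : Prop :=
  ∀ i, ∑ j ∈ Finset.univ.filter (fun j => G.Adj i j), uCtrl b a i j • (a i - a j) = 0

/-- The control law is symmetric in its two vertex arguments. -/
lemma uCtrl_symm {n N : ℕ} (b a : Fin N → EuclideanSpace ℝ (Fin n)) (i j : Fin N) :
    uCtrl b a i j = uCtrl b a j i := by
  unfold uCtrl
  by_cases h : a j = a i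
  · rw [if_pos h, if_pos h.symm]
  · rw [if_neg h, if_neg (fun e => h e.symm), ← neg_sub (b j), ← neg_sub (a j),
      inner_neg_neg, norm_neg]

/-- Per-edge identity: the symmetrized inner-product term equals `-u_ij² ‖a i - a j‖²`. -/
lemma uCtrl_key {n N : ℕ} (b a : Fin N → EuclideanSpace ℝ (Fin n)) (i j : Fin N) :
    uCtrl b a i j * ⟪a i - a j, a i - b i⟫ + uCtrl b a j i * ⟪a j - a i, a j - b j⟫
      = -((uCtrl b a i j) ^ 2 * ‖a i - a j‖ ^ 2) := by
  by_cases h : a j = a i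
  · have h0 : uCtrl b a i j = 0 := by simp [uCtrl, h]
    have h1 : uCtrl b a j i = 0 := by simp [uCtrl, h.symm]
    simp [h0, h1]
  · rw [uCtrl_symm b a j i]
    have hd : a i - a j ≠ 0 := sub_ne_zero.mpr (fun e => h e.symm)
    have hr : ‖a i - a j‖ ^ 2 ≠ 0 := pow_ne_zero _ (norm_ne_zero_iff.mpr hd)
    have hu : uCtrl b a i j = ⟪a i - a j, b i - b j⟫ / ‖a i - a j‖ ^ 2 - 1 := by
      rw [uCtrl, if_neg h, ← neg_sub (b j), ← neg_sub (a j), inner_neg_neg, norm_neg,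
        real_inner_comm]
    have expand : uCtrl b a i j * ⟪a i - a j, a i - b i⟫
        + uCtrl b a i j * ⟪a j - a i, a j - b j⟫
        = uCtrl b a i j * (⟪a i - a j, a i - a j⟫ - ⟪a i - a j, b i - b j⟫) := by
      rw [← neg_sub (a i) (a j), inner_neg_left]
      rw [show (⟪a i - a j, a i - a j⟫ - ⟪a i - a j, b i - b j⟫ : ℝ)
          = ⟪a i - a j, a i - b i⟫ - ⟪a i - a j, a j - b j⟫ by
        rw [← inner_sub_right, ← inner_sub_right]
        congr 1; abel]
      ring
    rw [expand, real_inner_self_eq_norm_sq, hu]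
    field_simp
    ring

/-- `∑_{(i,j)∈E} u_ij(p)² ‖a_i - a_j‖² = 0` iff `p` is an equilibrium of the
formation control system. -/
theorem edgeSum_eq_zero_iff_isEquilibrium {n N : ℕ} (G : SimpleGraph (Fin N))
    (b a : Fin N → EuclideanSpace ℝ (Fin n)) :
    edgeSum G (fun i j => (uCtrl b a i j) ^ 2 * ‖a i - a j‖ ^ 2) = 0 ↔
      IsEquilibrium G b a := by
  classical
  set F : Fin N × Fin N → ℝ :=
    fun p => uCtrl b a p.1 p.2 * ⟪a p.1 - a p.2, a p.1 - b p.1⟫ with hF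
  -- step A : the sum over ordered adjacent pairs equals the sum of inner products of
  -- the equilibrium vectors with `a i - b i`
  have hA : ∑ p ∈ univ.filter (fun p : Fin N × Fin N => G.Adj p.1 p.2), F p
      = ∑ i, ⟪∑ j ∈ univ.filter (fun j => G.Adj i j),
          uCtrl b a i j • (a i - a j), a i - b i⟫ := by
    rw [Finset.sum_filter, Fintype.sum_prod_type]
    refine Finset.sum_congr rfl fun i _ => ?_
    rw [sum_inner, Finset.sum_filter]
    refine Finset.sum_congr rfl fun j _ => ?_
    split_ifs with hadj
    · rw [real_inner_smul_left]
    · rfl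
  -- step B : split ordered pairs into (i<j) and (j<i) and use the per-edge identity
  have hsplit : (univ.filter (fun p : Fin N × Fin N => G.Adj p.1 p.2))
      = (univ.filter (fun p : Fin N × Fin N => p.1 < p.2 ∧ G.Adj p.1 p.2))
        ∪ (univ.filter (fun p : Fin N × Fin N => p.2 < p.1 ∧ G.Adj p.1 p.2)) := by
    ext p
    simp only [Finset.mem_filter, Finset.mem_union, Finset.mem_univ, true_and]
    constructor
    · intro hadj
      rcases lt_or_gt_of_ne (G.ne_of_adj hadj) with hlt | hgt
      · exact Or.inl ⟨hlt, hadj⟩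
      · exact Or.inr ⟨hgt, hadj⟩
    · rintro (⟨-, hadj⟩ | ⟨-, hadj⟩) <;> exact hadj
  have hdisj : Disjoint
      (univ.filter (fun p : Fin N × Fin N => p.1 < p.2 ∧ G.Adj p.1 p.2))
      (univ.filter (fun p : Fin N × Fin N => p.2 < p.1 ∧ G.Adj p.1 p.2)) := by
    rw [Finset.disjoint_left]
    intro p hp hq
    simp only [Finset.mem_filter] at hp hq
    exact absurd hq.2.1 (not_lt_of_gt hp.2.1)
  have hswap : ∑ p ∈ univ.filter (fun p : Fin N × Fin N => p.2 < p.1 ∧ G.Adj p.1 p.2), F p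
      = ∑ p ∈ univ.filter (fun p : Fin N × Fin N => p.1 < p.2 ∧ G.Adj p.1 p.2), F p.swap := by
    refine Finset.sum_equiv (Equiv.prodComm _ _) (fun p => ?_) (fun p _ => rfl)
    simp only [Finset.mem_filter, Finset.mem_univ, true_and, Equiv.prodComm_apply,
      Prod.fst_swap, Prod.snd_swap]
    exact and_congr Iff.rfl (G.adj_comm _ _)
  have hB : ∑ p ∈ univ.filter (fun p : Fin N × Fin N => G.Adj p.1 p.2), F p
      = - edgeSum G (fun i j => (uCtrl b a i j) ^ 2 * ‖a i - a j‖ ^ 2) := by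
    rw [hsplit, Finset.sum_union hdisj, hswap, ← Finset.sum_add_distrib, edgeSum,
      ← Finset.sum_neg_distrib]
    refine Finset.sum_congr rfl fun p _ => ?_
    exact uCtrl_key b a p.1 p.2
  constructor
  · -- the sum of nonnegative terms is zero, hence each term vanishes
    intro h0 i
    have hnn : ∀ p ∈ univ.filter (fun p : Fin N × Fin N => p.1 < p.2 ∧ G.Adj p.1 p.2),
        (0:ℝ) ≤ (uCtrl b a p.1 p.2) ^ 2 * ‖a p.1 - a p.2‖ ^ 2 :=
      fun p _ => mul_nonneg (sq_nonneg _) (sq_nonneg _)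
    have hz := (Finset.sum_eq_zero_iff_of_nonneg hnn).mp h0
    have key : ∀ k l, G.Adj k l → uCtrl b a k l • (a k - a l) = 0 := by
      have base : ∀ k l, G.Adj k l → k < l → uCtrl b a k l • (a k - a l) = 0 := by
        intro k l hadj hlt
        have hm : ((k, l) : Fin N × Fin N) ∈
            univ.filter (fun p : Fin N × Fin N => p.1 < p.2 ∧ G.Adj p.1 p.2) := by
          simp [hlt, hadj]
        have := hz _ hm
        rcases mul_eq_zero.mp this with hu | hn
        · rw [pow_eq_zero_iff (two_ne_zero)] at hu
          rw [hu, zero_smul]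
        · rw [pow_eq_zero_iff (two_ne_zero), norm_eq_zero] at hn
          rw [hn, smul_zero]
      intro k l hadj
      rcases lt_or_gt_of_ne (G.ne_of_adj hadj) with hlt | hgt
      · exact base k l hadj hlt
      · have := base l k (G.adj_symm hadj) hgt
        rw [uCtrl_symm b a k l, show a k - a l = -(a l - a k) by abel, smul_neg, this, neg_zero]
    exact Finset.sum_eq_zero fun j hj => key i j (by simpa using hj)
  · -- an equilibrium makes the ordered-pair sum vanish, hence the edge sum vanishes
    intro heq
    have : ∑ p ∈ univ.filter (fun p : Fin N × Fin N => G.Adj p.1 p.2), F p = 0 := by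
      rw [hA]
      exact Finset.sum_eq_zero fun i _ => by rw [heq i, inner_zero_left]
    rw [hB] at this
    linarith
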